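/- Under the LATE assumptions and EMCO, with κ_(d) := 1(D=d)·(Z − P(Z=1))/(P(Z=0)·P(Z=1)) for d > 0 and any bounded measurable g: E[κ_(d)·g(Y)] / P(D(1)=d>D(0)) = E[g(Y(d)) | D(1)=d, D(0)=0], provided P(D(1)=d>D(0)) > 0. -/

import Mathlib

open MeasureTheory ProbabilityTheory

variable {Ω : Type*}

/-- probability of a set -/
noncomputable def pr [MeasurableSpace Ω] (μ : MeasureTheory.Measure Ω) (A : Set Ω) : ℝ :=
  (μ A).toReal

/-- conditional probability P(A | B) -/
noncomputable def cP [MeasurableSpace Ω] (μ : MeasureTheory.Measure Ω) (A B : Set Ω) : ℝ :=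
  pr μ (A ∩ B) / pr μ B

/-- conditional expectation E[f | B] -/
noncomputable def cE [MeasurableSpace Ω] (μ : MeasureTheory.Measure Ω) (f : Ω → ℝ) (B : Set Ω) : ℝ :=
  (∫ ω in B, f ω ∂μ) / pr μ B

/-- observed treatment D = Z·D(1) + (1−Z)·D(0) -/
def obsD (Z D0 D1 : Ω → ℕ) : Ω → ℕ := fun ω => if Z ω = 1 then D1 ω else D0 ω

/-- observed outcome Y = Y(D) -/
noncomputable def obsY (Z D0 D1 : Ω → ℕ) (Yp : ℕ → Ω → ℝ) : Ω → ℝ :=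
  fun ω => Yp (obsD Z D0 D1 ω) ω

/-- kappa_(d) weighting identifies treated moments of d-type
compliers under LATE + EMCO. -/
theorem kappa_d_identifies_treated_moments
    [MeasurableSpace Ω] (μ : MeasureTheory.Measure Ω) [IsProbabilityMeasure μ]
    (Dbar : ℕ) (Z D0 D1 : Ω → ℕ) (Yp : ℕ → Ω → ℝ)
    (hZ01 : ∀ ω, Z ω = 0 ∨ Z ω = 1)
    (hZm : Measurable Z) (hD0m : Measurable D0) (hD1m : Measurable D1)
    (hD0b : ∀ ω, D0 ω ≤ Dbar) (hD1b : ∀ ω, D1 ω ≤ Dbar)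
    (hYm : ∀ d, Measurable (Yp d))
    (hindep : IndepFun (fun ω => (D0 ω, D1 ω, fun d => Yp d ω)) Z μ)
    (hmono : ∀ᵐ ω ∂μ, D0 ω ≤ D1 ω)
    (hemco : ∀ᵐ ω ∂μ, D0 ω < D1 ω → D0 ω = 0)
    (hZ1pos : 0 < pr μ {ω | Z ω = 1}) (hZ1lt : pr μ {ω | Z ω = 1} < 1)
    (d : ℕ) (hd : 0 < d) (hdcomp : 0 < pr μ {ω | D1 ω = d ∧ D0 ω = 0})
    (g : ℝ → ℝ) (hgm : Measurable g) (hgb : ∃ C, ∀ x, |g x| ≤ C) :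
    (∫ ω, (if obsD Z D0 D1 ω = d then (1 : ℝ) else 0) *
          (((Z ω : ℝ) - pr μ {ω' | Z ω' = 1}) /
            (pr μ {ω' | Z ω' = 0} * pr μ {ω' | Z ω' = 1})) *
        g (obsY Z D0 D1 Yp ω) ∂μ) /
      pr μ {ω | D1 ω = d ∧ D0 ω = 0} =
    cE μ (fun ω => g (Yp d ω)) {ω | D1 ω = d ∧ D0 ω = 0} := by
  obtain ⟨C, hC⟩ := hgb
  set p : ℝ := pr μ {ω' | Z ω' = 1} with hpdef
  set q : ℝ := pr μ {ω' | Z ω' = 0} with hqdef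
  -- {Z = 0} is the complement of {Z = 1}
  have hcompl : {ω | Z ω = 0} = {ω | Z ω = 1}ᶜ := by
    ext ω
    rcases hZ01 ω with h | h <;> simp [h]
  have hZ1meas : MeasurableSet {ω | Z ω = 1} := hZm (measurableSet_singleton 1)
  have hZ0meas : MeasurableSet {ω | Z ω = 0} := hZm (measurableSet_singleton 0)
  have hq1 : q = 1 - p := by
    rw [hqdef, hcompl, pr, prob_compl_eq_one_sub hZ1meas, hpdef, pr]
    rw [ENNReal.toReal_sub_of_le prob_le_one (by simp)]
    simp
  have hqpos : 0 < q := by rw [hq1]; linarith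
  have hppos : 0 < p := hZ1pos
  -- measurability of the "type" map W
  set W : Ω → ℕ × ℕ × (ℕ → ℝ) := fun ω => (D0 ω, D1 ω, fun d => Yp d ω) with hWdef
  have hWm : Measurable W := by
    refine hD0m.prodMk (hD1m.prodMk ?_)
    exact measurable_pi_lambda _ fun d => hYm d
  -- component functions
  set h1 : Ω → ℝ := fun ω => (if D1 ω = d then (1 : ℝ) else 0) * g (Yp d ω) with hh1
  set h0 : Ω → ℝ := fun ω => (if D0 ω = d then (1 : ℝ) else 0) * g (Yp d ω) with hh0
  set χ1 : Ω → ℝ := fun ω => if Z ω = 1 then (1 : ℝ) else 0 with hχ1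
  set χ0 : Ω → ℝ := fun ω => if Z ω = 0 then (1 : ℝ) else 0 with hχ0
  -- as compositions
  set F1 : ℕ × ℕ × (ℕ → ℝ) → ℝ := fun x => (if x.2.1 = d then (1 : ℝ) else 0) * g (x.2.2 d)
    with hF1
  set F0 : ℕ × ℕ × (ℕ → ℝ) → ℝ := fun x => (if x.1 = d then (1 : ℝ) else 0) * g (x.2.2 d)
    with hF0
  set φ1 : ℕ → ℝ := fun z => if z = 1 then (1 : ℝ) else 0 with hφ1
  set φ0 : ℕ → ℝ := fun z => if z = 0 then (1 : ℝ) else 0 with hφ0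
  have hgev : Measurable fun x : ℕ × ℕ × (ℕ → ℝ) => g (x.2.2 d) :=
    hgm.comp ((measurable_pi_apply d).comp (measurable_snd.comp measurable_snd))
  have hs1 : MeasurableSet {x : ℕ × ℕ × (ℕ → ℝ) | x.2.1 = d} :=
    (measurable_fst.comp measurable_snd) (measurableSet_singleton d)
  have hs0 : MeasurableSet {x : ℕ × ℕ × (ℕ → ℝ) | x.1 = d} :=
    measurable_fst (measurableSet_singleton d)
  have hF1m : Measurable F1 :=
    Measurable.mul (Measurable.ite hs1 measurable_const measurable_const) hgev
  have hF0m : Measurable F0 :=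
    Measurable.mul (Measurable.ite hs0 measurable_const measurable_const) hgev
  have hφ1m : Measurable φ1 := measurable_of_countable _
  have hφ0m : Measurable φ0 := measurable_of_countable _
  have h1eq : h1 = F1 ∘ W := rfl
  have h0eq : h0 = F0 ∘ W := rfl
  have hχ1eq : χ1 = φ1 ∘ Z := rfl
  have hχ0eq : χ0 = φ0 ∘ Z := rfl
  have hind1 : IndepFun h1 χ1 μ := by rw [h1eq, hχ1eq]; exact hindep.comp hF1m hφ1m
  have hind0 : IndepFun h0 χ0 μ := by rw [h0eq, hχ0eq]; exact hindep.comp hF0m hφ0m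
  have hh1m : Measurable h1 := by rw [h1eq]; exact hF1m.comp hWm
  have hh0m : Measurable h0 := by rw [h0eq]; exact hF0m.comp hWm
  have hχ1m : Measurable χ1 := by rw [hχ1eq]; exact hφ1m.comp hZm
  have hχ0m : Measurable χ0 := by rw [hχ0eq]; exact hφ0m.comp hZm
  -- integrability of bounded measurable functions
  have hbound : ∀ (h : Ω → ℝ), Measurable h → (∀ ω, |h ω| ≤ C + 1) → Integrable h μ := by
    intro h hm hb
    exact ⟨hm.aestronglyMeasurable,
      (hasFiniteIntegral_const (C + 1)).mono' (ae_of_all _ fun ω => by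
        simpa [Real.norm_eq_abs] using hb ω)⟩
  have hCnn : (0:ℝ) ≤ C := (abs_nonneg _).trans (hC 0)
  have habs : ∀ (c : ℝ) (x : ℝ), |(if x = c then x else x)| = |x| := by intros; simp
  have hb1 : ∀ ω, |h1 ω| ≤ C + 1 := by
    intro ω
    rw [hh1]; simp only [abs_mul]
    calc |if D1 ω = d then (1:ℝ) else 0| * |g (Yp d ω)| ≤ 1 * C := by
          apply mul_le_mul _ (hC _) (abs_nonneg _) zero_le_one
          split <;> simp
      _ ≤ C + 1 := by linarith
  have hb0 : ∀ ω, |h0 ω| ≤ C + 1 := by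
    intro ω
    rw [hh0]; simp only [abs_mul]
    calc |if D0 ω = d then (1:ℝ) else 0| * |g (Yp d ω)| ≤ 1 * C := by
          apply mul_le_mul _ (hC _) (abs_nonneg _) zero_le_one
          split <;> simp
      _ ≤ C + 1 := by linarith
  have hi1 : Integrable h1 μ := hbound h1 hh1m hb1
  have hi0 : Integrable h0 μ := hbound h0 hh0m hb0
  have hbχ1 : ∀ ω, |χ1 ω| ≤ 1 := by
    intro ω
    show |if Z ω = 1 then (1:ℝ) else 0| ≤ 1
    split <;> simp
  have hbχ0 : ∀ ω, |χ0 ω| ≤ 1 := by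
    intro ω
    show |if Z ω = 0 then (1:ℝ) else 0| ≤ 1
    split <;> simp
  have hiχ1 : Integrable χ1 μ := hbound χ1 hχ1m (fun ω => (hbχ1 ω).trans (by linarith))
  have hiχ0 : Integrable χ0 μ := hbound χ0 hχ0m (fun ω => (hbχ0 ω).trans (by linarith))
  -- pointwise identity for the integrand
  have hptwise : ∀ ω,
      (if obsD Z D0 D1 ω = d then (1 : ℝ) else 0) * (((Z ω : ℝ) - p) / (q * p)) *
        g (obsY Z D0 D1 Yp ω)
      = (1 / p) * (h1 ω * χ1 ω) - (1 / q) * (h0 ω * χ0 ω) := by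
    intro ω
    have hp0 : p ≠ 0 := ne_of_gt hppos
    have hq0 : q ≠ 0 := ne_of_gt hqpos
    have e1 : h1 ω = (if D1 ω = d then (1:ℝ) else 0) * g (Yp d ω) := rfl
    have e0 : h0 ω = (if D0 ω = d then (1:ℝ) else 0) * g (Yp d ω) := rfl
    rcases hZ01 ω with hz | hz
    · have hχ1z : χ1 ω = 0 := by
        show (if Z ω = 1 then (1:ℝ) else 0) = 0
        rw [hz]; norm_num
      have hχ0z : χ0 ω = 1 := by
        show (if Z ω = 0 then (1:ℝ) else 0) = 1
        rw [hz]; norm_num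
      have hobsD : obsD Z D0 D1 ω = D0 ω := by simp [obsD, hz]
      have hobsY : obsY Z D0 D1 Yp ω = Yp (D0 ω) ω := by simp [obsY, hobsD]
      rw [hobsD, hobsY, hz, e1, e0, hχ1z, hχ0z]
      by_cases hD : D0 ω = d
      · rw [if_pos hD, hD]
        push_cast
        field_simp
        ring
      · rw [if_neg hD]
        simp
    · have hχ1z : χ1 ω = 1 := by
        show (if Z ω = 1 then (1:ℝ) else 0) = 1
        rw [hz]; norm_num
      have hχ0z : χ0 ω = 0 := by
        show (if Z ω = 0 then (1:ℝ) else 0) = 0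
        rw [hz]; norm_num
      have hobsD : obsD Z D0 D1 ω = D1 ω := by simp [obsD, hz]
      have hobsY : obsY Z D0 D1 Yp ω = Yp (D1 ω) ω := by simp [obsY, hobsD]
      rw [hobsD, hobsY, hz, e1, e0, hχ1z, hχ0z]
      by_cases hD : D1 ω = d
      · rw [if_pos hD, hD]
        have h1pq : (1:ℝ) - p = q := by rw [hq1]
        push_cast
        rw [h1pq]
        field_simp
        ring
      · rw [if_neg hD]
        simp
  -- integrals of indicators of Z
  have hintχ1 : ∫ ω, χ1 ω ∂μ = p := by
    have : χ1 = Set.indicator {ω | Z ω = 1} (fun _ => (1:ℝ)) := by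
      funext ω; rw [hχ1, Set.indicator_apply]; simp [Set.mem_setOf_eq]
    rw [this, integral_indicator hZ1meas, setIntegral_const]
    simp [hpdef, pr]
    rfl
  have hintχ0 : ∫ ω, χ0 ω ∂μ = q := by
    have : χ0 = Set.indicator {ω | Z ω = 0} (fun _ => (1:ℝ)) := by
      funext ω; rw [hχ0, Set.indicator_apply]; simp [Set.mem_setOf_eq]
    rw [this, integral_indicator hZ0meas, setIntegral_const]
    simp [hqdef, pr]
    rfl
  -- products are integrable
  have hip1 : Integrable (fun ω => h1 ω * χ1 ω) μ :=
    hbound _ (hh1m.mul hχ1m) (fun ω => by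
      rw [abs_mul]
      calc |h1 ω| * |χ1 ω| ≤ (C + 1) * 1 := by
            exact mul_le_mul (hb1 ω) (hbχ1 ω) (abs_nonneg _) (by linarith)
        _ = C + 1 := mul_one _)
  have hip0 : Integrable (fun ω => h0 ω * χ0 ω) μ :=
    hbound _ (hh0m.mul hχ0m) (fun ω => by
      rw [abs_mul]
      calc |h0 ω| * |χ0 ω| ≤ (C + 1) * 1 := by
            exact mul_le_mul (hb0 ω) (hbχ0 ω) (abs_nonneg _) (by linarith)
        _ = C + 1 := mul_one _)
  -- compute the main integral
  have hmain : (∫ ω, (if obsD Z D0 D1 ω = d then (1 : ℝ) else 0) *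
        (((Z ω : ℝ) - p) / (q * p)) * g (obsY Z D0 D1 Yp ω) ∂μ)
      = (∫ ω, h1 ω ∂μ) - (∫ ω, h0 ω ∂μ) := by
    calc (∫ ω, (if obsD Z D0 D1 ω = d then (1 : ℝ) else 0) *
            (((Z ω : ℝ) - p) / (q * p)) * g (obsY Z D0 D1 Yp ω) ∂μ)
        = ∫ ω, ((1 / p) * (h1 ω * χ1 ω) - (1 / q) * (h0 ω * χ0 ω)) ∂μ := by
          exact integral_congr_ae (ae_of_all _ hptwise)
      _ = (1 / p) * ∫ ω, h1 ω * χ1 ω ∂μ - (1 / q) * ∫ ω, h0 ω * χ0 ω ∂μ := by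
          rw [integral_sub (hip1.const_mul _) (hip0.const_mul _),
            integral_const_mul, integral_const_mul]
      _ = (1 / p) * ((∫ ω, h1 ω ∂μ) * p) - (1 / q) * ((∫ ω, h0 ω ∂μ) * q) := by
          rw [hind1.integral_fun_mul_eq_mul_integral hi1.1 hiχ1.1, hind0.integral_fun_mul_eq_mul_integral hi0.1 hiχ0.1,
            hintχ1, hintχ0]
      _ = (∫ ω, h1 ω ∂μ) - (∫ ω, h0 ω ∂μ) := by
          field_simp
  -- a.e. identity: h1 - h0 = indicator of compliers
  have haeid : (fun ω => h1 ω - h0 ω) =ᵐ[μ]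
      Set.indicator {ω | D1 ω = d ∧ D0 ω = 0} (fun ω => g (Yp d ω)) := by
    filter_upwards [hmono, hemco] with ω hm he
    simp only [hh1, hh0, Set.indicator_apply, Set.mem_setOf_eq]
    rcases eq_or_ne (D1 ω) d with h1d | h1d
    · rcases eq_or_ne (D0 ω) d with h0d | h0d
      · rw [if_pos h1d, if_pos h0d, if_neg (by omega : ¬(D1 ω = d ∧ D0 ω = 0))]
        ring
      · have h0z : D0 ω = 0 := he (by omega)
        rw [if_pos h1d, if_neg h0d, if_pos ⟨h1d, h0z⟩]
        ring
    · rcases eq_or_ne (D0 ω) d with h0d | h0d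
      · exfalso
        have := he (by omega)
        omega
      · rw [if_neg h1d, if_neg h0d, if_neg (by omega : ¬(D1 ω = d ∧ D0 ω = 0))]
        ring
  have hBmeas : MeasurableSet {ω | D1 ω = d ∧ D0 ω = 0} := by
    have : {ω | D1 ω = d ∧ D0 ω = 0} = (D1 ⁻¹' {d}) ∩ (D0 ⁻¹' {0}) := by
      ext ω; simp [Set.mem_setOf_eq]
    rw [this]
    exact (hD1m (measurableSet_singleton d)).inter (hD0m (measurableSet_singleton 0))
  have hdiff : (∫ ω, h1 ω ∂μ) - (∫ ω, h0 ω ∂μ)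
      = ∫ ω in {ω | D1 ω = d ∧ D0 ω = 0}, g (Yp d ω) ∂μ := by
    rw [← integral_sub hi1 hi0, integral_congr_ae haeid, integral_indicator hBmeas]
  rw [hmain, hdiff]
  rfl
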